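/- The Diophantine equation c_1 x^2 + c_2 y + c_3 = 0 has a solution in non-negative integers x, y if and only if there exists a word w over the binary alphabet {a, b} such that c_1·|w|_a + 2·c_1·|w|_{aa} + c_2·|w|_b + c_3 = 0. -/

import Mathlib

def swc {α : Type*} [DecidableEq α] (w u : List α) : ℕ := w.sublists.count u

lemma count_inst {α : Type*} [DecidableEq α] (u : List α) (l : List (List α)) :
    @List.count _ List.instBEq u l = @List.count _ instBEqOfDecidableEq u l := by
  induction l with
  | nil => rfl
  | cons s l ih => simp_all [List.count_cons]

lemma swc_eq {α : Type*} [DecidableEq α] (w u : List α) :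
    swc w u = w.sublists'.count u := by
  unfold swc
  rw [count_inst, count_inst]
  have := (List.sublists_perm_sublists' w).count_eq u
  simp only [count_inst] at this ⊢
  exact this

lemma count_nil_sublists' {α : Type*} [DecidableEq α] (w : List α) :
    w.sublists'.count ([] : List α) = 1 := by
  induction w with
  | nil => rfl
  | cons a l ih =>
    rw [List.sublists'_cons, List.count_append, ih, List.count_eq_zero.2]
    intro h
    simp only [List.mem_map] at h
    obtain ⟨t, _, ht⟩ := h
    exact List.cons_ne_nil a t ht

lemma count_map_cons {α : Type*} [DecidableEq α] (a : α) (t : List α) (S : List (List α)) :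
    (S.map (a :: ·)).count (a :: t) = S.count t := by
  induction S with
  | nil => rfl
  | cons s S ih => simp [List.count_cons, ih]

lemma count_map_cons_ne {α : Type*} [DecidableEq α] {a b : α} (hab : b ≠ a) (t : List α)
    (S : List (List α)) : (S.map (a :: ·)).count (b :: t) = 0 := by
  rw [List.count_eq_zero]
  intro h
  simp only [List.mem_map] at h
  obtain ⟨u, _, hu⟩ := h
  exact hab (by injection hu.symm)

lemma swc_single {α : Type*} [DecidableEq α] (w : List α) (x : α) :
    swc w [x] = w.count x := by
  rw [swc_eq]
  induction w with
  | nil => rfl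
  | cons a l ih =>
    rw [List.sublists'_cons, List.count_append, ih]
    by_cases h : x = a
    · subst h
      rw [count_map_cons x [] l.sublists', count_nil_sublists', List.count_cons_self]
    · rw [count_map_cons_ne h, List.count_cons_of_ne (Ne.symm h), Nat.add_zero]

lemma swc_pair {α : Type*} [DecidableEq α] (w : List α) (x : α) :
    swc w [x, x] = (w.count x).choose 2 := by
  rw [swc_eq]
  induction w with
  | nil => rfl
  | cons a l ih =>
    rw [List.sublists'_cons, List.count_append, ih]
    by_cases h : x = a
    · subst h
      have : (l.sublists'.map (x :: ·)).count [x, x] = l.count x := by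
        rw [count_map_cons x [x] l.sublists']
        rw [← swc_eq, swc_single]
      rw [this, List.count_cons_self, Nat.choose_succ_succ, Nat.choose_one_right,
        Nat.add_comm]
    · rw [count_map_cons_ne h, List.count_cons_of_ne (Ne.symm h), Nat.add_zero]

lemma two_choose_two (n : ℕ) : 2 * (n.choose 2 : ℤ) = (n : ℤ) * ((n : ℤ) - 1) := by
  have hn : 2 * n.choose 2 = n * (n - 1) := by
    induction n with
    | zero => rfl
    | succ m ih =>
      rw [Nat.choose_succ_succ, Nat.choose_one_right, Nat.mul_add, ih]
      cases m with
      | zero => rfl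
      | succ k => simp only [Nat.succ_sub_one]; ring
  have h2 : ((n * (n - 1) : ℕ) : ℤ) = (n : ℤ) * ((n : ℤ) - 1) := by
    cases n with
    | zero => simp
    | succ m => push_cast; ring
  rw [← h2, ← hn]; push_cast; ring

theorem stmt12 (c₁ c₂ c₃ : ℤ) :
    (∃ x y : ℕ, c₁ * (x : ℤ) ^ 2 + c₂ * (y : ℤ) + c₃ = 0) ↔
      (∃ w : List (Fin 2),
        c₁ * (w.count 0 : ℤ) + 2 * c₁ * (swc w [0, 0] : ℤ)
          + c₂ * (w.count 1 : ℤ) + c₃ = 0) := by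
  have key : ∀ w : List (Fin 2),
      c₁ * (w.count 0 : ℤ) + 2 * c₁ * (swc w [0, 0] : ℤ) + c₂ * (w.count 1 : ℤ) + c₃
        = c₁ * (w.count 0 : ℤ) ^ 2 + c₂ * (w.count 1 : ℤ) + c₃ := by
    intro w
    rw [swc_pair]
    have h2 := two_choose_two (w.count 0)
    linear_combination c₁ * h2
  constructor
  · rintro ⟨x, y, hxy⟩
    refine ⟨List.replicate x 0 ++ List.replicate y 1, ?_⟩
    rw [key]
    simp only [List.count_append, List.count_replicate_self, List.count_replicate]
    norm_num
    convert hxy using 2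
  · rintro ⟨w, hw⟩
    exact ⟨w.count 0, w.count 1, by rw [← key]; exact hw⟩
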